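/- For n ≥ 3, the strong metric dimension of the inclusion graph on nonempty proper subsets of an n-element set equals 2^n − 2n + 1. -/

import Mathlib

open SimpleGraph Finset

variable {V : Type*}

/-- A set of vertices is resolving if distance vectors to it distinguish vertices. -/
def IsResolving (G : SimpleGraph V) (S : Set V) : Prop :=
  ∀ u v : V, (∀ w ∈ S, G.dist u w = G.dist v w) → u = v

/-- The metric dimension: the least size of a (finite) resolving set. -/
noncomputable def metricDim (G : SimpleGraph V) : ℕ :=
  sInf {k | ∃ S : Finset V, S.card = k ∧ IsResolving G ↑S}

/-- Two vertices are mutually maximally distant. -/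
def MMD (G : SimpleGraph V) (u v : V) : Prop :=
  u ≠ v ∧ (∀ w, G.Adj u w → G.dist v w ≤ G.dist u v) ∧
    (∀ w, G.Adj v w → G.dist u w ≤ G.dist u v)

/-- The strong resolving graph: edges between mutually maximally distant vertices. -/
def strongResolvingGraph (G : SimpleGraph V) : SimpleGraph V where
  Adj u v := MMD G u v
  symm := ⟨by
    rintro u v ⟨hne, h1, h2⟩
    refine ⟨hne.symm, ?_, ?_⟩
    · intro w hw
      rw [SimpleGraph.dist_comm (u := v) (v := u)]
      exact h2 w hw
    · intro w hw
      rw [SimpleGraph.dist_comm (u := v) (v := u)]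
      exact h1 w hw⟩
  loopless := ⟨fun v h => h.1 rfl⟩

/-- A set strongly resolving a graph. -/
def IsStrongResolving (G : SimpleGraph V) (S : Set V) : Prop :=
  ∀ u v : V, u ≠ v → ∃ w ∈ S,
    G.dist w u = G.dist w v + G.dist v u ∨ G.dist w v = G.dist w u + G.dist u v

/-- Strong metric dimension. -/
noncomputable def sdim (G : SimpleGraph V) : ℕ :=
  sInf {k | ∃ S : Finset V, S.card = k ∧ IsStrongResolving G ↑S}

/-- An independent set of vertices. -/
def IsIndepFinset (G : SimpleGraph V) (S : Finset V) : Prop :=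
  ∀ u ∈ S, ∀ v ∈ S, u ≠ v → ¬ G.Adj u v

/-- Independence number. -/
noncomputable def indepNum (G : SimpleGraph V) : ℕ :=
  sSup {k | ∃ S : Finset V, S.card = k ∧ IsIndepFinset G S}

/-- Vertices of the inclusion graph on `{1,...,n}`: nonempty proper subsets. -/
def SubVert (n : ℕ) := {A : Finset (Fin n) // A.Nonempty ∧ A ≠ Finset.univ}

/-- The inclusion graph on nonempty proper subsets of `{1,...,n}`. -/
def inclGraph (n : ℕ) : SimpleGraph (SubVert n) where
  Adj A B := A.1 ⊂ B.1 ∨ B.1 ⊂ A.1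
  symm := ⟨fun _ _ h => h.symm⟩
  loopless := ⟨fun A h => by
    rcases h with h | h <;> exact (ssubset_irrefl A.1) h⟩

/-- Complement of a vertex of the inclusion graph. -/
def complVert {n : ℕ} (A : SubVert n) : SubVert n :=
  ⟨A.1ᶜ,
    Finset.nonempty_iff_ne_empty.mpr fun h => A.2.2 (by simpa using h),
    fun h => (Finset.nonempty_iff_ne_empty.mp A.2.1) (by simpa using h)⟩

/-- Vertices of the inclusion ideal graph of a product of chain rings:
tuples in a product of chains, excluding bottom and top. -/
def ChainVert {m : ℕ} (d : Fin m → ℕ) := {v : ∀ i, Fin (d i + 2) // v ≠ ⊥ ∧ v ≠ ⊤}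

/-- The inclusion graph on a product of chains (minus bottom and top),
modelling the inclusion ideal graph of a product of principal ideal rings. -/
def chainGraph {m : ℕ} (d : Fin m → ℕ) : SimpleGraph (ChainVert d) where
  Adj I J := I.1 < J.1 ∨ J.1 < I.1
  symm := ⟨fun _ _ h => h.symm⟩
  loopless := ⟨fun I h => by rcases h with h | h <;> exact lt_irrefl _ h⟩


lemma laminar_bound {α : Type*} [DecidableEq α] :
    ∀ (m : ℕ) (s : Finset α) (L : Finset (Finset α)), s.card ≤ m →
    (∀ A ∈ L, A ⊆ s ∧ A.Nonempty) →
    (∀ A ∈ L, ∀ B ∈ L, A ⊆ B ∨ B ⊆ A ∨ A ∩ B = ∅) →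
    L.card ≤ 2 * s.card - 1 := by
  intro m
  induction m with
  | zero =>
      intro s L hm hsub _
      interval_cases h : s.card
      · rcases L.eq_empty_or_nonempty with rfl | ⟨A, hA⟩
        · simp
        · obtain ⟨hAs, a, ha⟩ := hsub A hA
          have := card_eq_zero.mp h
          subst this
          exact absurd (hAs ha) (by simp)
  | succ m ih =>
      intro s L hm hsub hlam
      by_cases hLe : L = ∅
      · simp [hLe]
      -- L nonempty, so s nonempty
      obtain ⟨A0, hA0⟩ := nonempty_iff_ne_empty.mpr hLe
      have hs1 : 1 ≤ s.card := by
        obtain ⟨hAs, a, ha⟩ := hsub A0 hA0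
        exact card_pos.mpr ⟨a, hAs ha⟩
      by_cases hprop : ∃ A ∈ L, A ≠ s
      · -- pick proper member of max card
        obtain ⟨M, hM, hMmax⟩ := (L.filter (fun A => A ≠ s)).exists_max_image
          (fun A => A.card) (by obtain ⟨A, hA, hAne⟩ := hprop; exact ⟨A, mem_filter.mpr ⟨hA, hAne⟩⟩)
        rw [mem_filter] at hM
        obtain ⟨hML, hMne⟩ := hM
        obtain ⟨hMs, hMnonempty⟩ := hsub M hML
        have hMssub : M ⊂ s := Finset.ssubset_iff_subset_ne.mpr ⟨hMs, hMne⟩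
        have hMcard : M.card < s.card := card_lt_card hMssub
        -- every member is s, ⊆ M, or ⊆ s \ M
        have hsplit : ∀ A ∈ L, A = s ∨ A ⊆ M ∨ A ⊆ s \ M := by
          intro A hA
          by_cases hAeq : A = s
          · exact Or.inl hAeq
          rcases hlam A hA M hML with h | h | h
          · exact Or.inr (Or.inl h)
          · -- M ⊆ A, A proper: card A ≤ card M so A = M
            have := hMmax A (mem_filter.mpr ⟨hA, hAeq⟩)
            exact Or.inr (Or.inl (h.antisymm (eq_of_subset_of_card_le h this ▸ subset_rfl) ▸ subset_rfl))
          · refine Or.inr (Or.inr ?_)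
            intro x hx
            rw [mem_sdiff]
            refine ⟨(hsub A hA).1 hx, fun hxM => ?_⟩
            have : x ∈ A ∩ M := mem_inter.mpr ⟨hx, hxM⟩
            simp [h] at this
        have hsubset : L ⊆ insert s ((L.filter (· ⊆ M)) ∪ (L.filter (· ⊆ s \ M))) := by
          intro A hA
          rcases hsplit A hA with rfl | h | h
          · exact mem_insert_self _ _
          · exact mem_insert_of_mem (mem_union_left _ (mem_filter.mpr ⟨hA, h⟩))
          · exact mem_insert_of_mem (mem_union_right _ (mem_filter.mpr ⟨hA, h⟩))
        have h1 : (L.filter (· ⊆ M)).card ≤ 2 * M.card - 1 := by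
          refine ih M _ (by omega) ?_ ?_
          · intro A hA; rw [mem_filter] at hA; exact ⟨hA.2, (hsub A hA.1).2⟩
          · intro A hA B hB; rw [mem_filter] at hA hB; exact hlam A hA.1 B hB.1
        have h2 : (L.filter (· ⊆ s \ M)).card ≤ 2 * (s \ M).card - 1 := by
          have : (s \ M).card < s.card := by
            apply card_lt_card
            rw [ssubset_iff_of_subset (sdiff_subset)]
            obtain ⟨a, ha⟩ := hMnonempty
            exact ⟨a, hMs ha, by simp [ha]⟩
          refine ih (s \ M) _ (by omega) ?_ ?_
          · intro A hA; rw [mem_filter] at hA; exact ⟨hA.2, (hsub A hA.1).2⟩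
          · intro A hA B hB; rw [mem_filter] at hA hB; exact hlam A hA.1 B hB.1
        have hM1 : 1 ≤ M.card := card_pos.mpr hMnonempty
        have hsd : (s \ M).card = s.card - M.card := card_sdiff_of_subset hMs
        calc L.card ≤ (insert s ((L.filter (· ⊆ M)) ∪ (L.filter (· ⊆ s \ M)))).card :=
              card_le_card hsubset
          _ ≤ 1 + ((L.filter (· ⊆ M)) ∪ (L.filter (· ⊆ s \ M))).card := by
              apply (card_insert_le _ _).trans; omega
          _ ≤ 1 + ((L.filter (· ⊆ M)).card + (L.filter (· ⊆ s \ M)).card) := by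
              have := card_union_le (L.filter (· ⊆ M)) (L.filter (· ⊆ s \ M)); omega
          _ ≤ 2 * s.card - 1 := by omega
      · -- all members equal s
        push_neg at hprop
        have : L ⊆ {s} := fun A hA => mem_singleton.mpr (hprop A hA)
        have := card_le_card this
        simp at this
        omega
section Dist

variable {n : ℕ}

lemma subvert_ne {A B : SubVert n} (h : A.1 ≠ B.1) : A ≠ B := fun he => h (by rw [he])

lemma subvert_ne1 {A B : SubVert n} (h : A ≠ B) : A.1 ≠ B.1 := fun he => h (Subtype.ext he)

lemma incl_adj {A B : SubVert n} : (inclGraph n).Adj A B ↔ (A.1 ⊂ B.1 ∨ B.1 ⊂ A.1) := Iff.rfl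

lemma dist_eq_one_of_adj {A B : SubVert n} (h : (inclGraph n).Adj A B) :
    (inclGraph n).dist A B = 1 := SimpleGraph.dist_eq_one_iff_adj.mpr h

lemma not_adj_of_incomp {A B : SubVert n} (h1 : ¬ A.1 ⊆ B.1) (h2 : ¬ B.1 ⊆ A.1) :
    ¬ (inclGraph n).Adj A B := by
  rintro (h | h)
  · exact h1 h.subset
  · exact h2 h.subset

lemma common_neighbor {A B : SubVert n} (h1 : ¬ A.1 ⊆ B.1) (h2 : ¬ B.1 ⊆ A.1)
    (h3 : B.1 ≠ A.1ᶜ) : ∃ C : SubVert n, (inclGraph n).Adj A C ∧ (inclGraph n).Adj C B := by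
  by_cases hint : (A.1 ∩ B.1).Nonempty
  · have hprop : A.1 ∩ B.1 ≠ Finset.univ := by
      intro h
      have hsub : A.1 ∩ B.1 ⊆ A.1 := Finset.inter_subset_left
      rw [h] at hsub
      exact A.2.2 (Finset.univ_subset_iff.mp hsub)
    refine ⟨⟨A.1 ∩ B.1, hint, hprop⟩, Or.inr ?_, Or.inl ?_⟩
    · constructor
      · exact Finset.inter_subset_left
      · intro hs
        exact h1 (fun x hx => (Finset.mem_inter.mp (hs hx)).2)
    · constructor
      · exact Finset.inter_subset_right
      · intro hs
        exact h2 (fun x hx => (Finset.mem_inter.mp (hs hx)).1)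
  · rw [Finset.not_nonempty_iff_eq_empty] at hint
    have hcup : A.1 ∪ B.1 ≠ Finset.univ := by
      intro h
      apply h3
      apply le_antisymm
      · intro x hx
        rw [Finset.mem_compl]
        intro hxA
        have : x ∈ A.1 ∩ B.1 := Finset.mem_inter.mpr ⟨hxA, hx⟩
        simp [hint] at this
      · intro x hx
        rw [Finset.mem_compl] at hx
        have hx' : x ∈ A.1 ∪ B.1 := by rw [h]; exact Finset.mem_univ x
        rcases Finset.mem_union.mp hx' with h' | h'
        · exact absurd h' hx
        · exact h'
    refine ⟨⟨A.1 ∪ B.1, A.2.1.mono Finset.subset_union_left, hcup⟩, Or.inl ?_, Or.inr ?_⟩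
    · refine ⟨Finset.subset_union_left, fun hs => ?_⟩
      obtain ⟨b, hb⟩ := B.2.1
      have hbA : b ∈ A.1 := hs (Finset.mem_union_right _ hb)
      have : b ∈ A.1 ∩ B.1 := Finset.mem_inter.mpr ⟨hbA, hb⟩
      simp [hint] at this
    · refine ⟨Finset.subset_union_right, fun hs => ?_⟩
      obtain ⟨a, ha⟩ := A.2.1
      have haB : a ∈ B.1 := hs (Finset.mem_union_left _ ha)
      have : a ∈ A.1 ∩ B.1 := Finset.mem_inter.mpr ⟨ha, haB⟩
      simp [hint] at this

/-- distance 2 for incomparable non-complementary pairs -/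
lemma dist_eq_two {A B : SubVert n} (h1 : ¬ A.1 ⊆ B.1) (h2 : ¬ B.1 ⊆ A.1)
    (h3 : B.1 ≠ A.1ᶜ) : (inclGraph n).dist A B = 2 := by
  have hne : A ≠ B := subvert_ne (fun h => h1 (le_of_eq h))
  have hnadj : ¬ (inclGraph n).Adj A B := not_adj_of_incomp h1 h2
  obtain ⟨C, hCA, hCB⟩ := common_neighbor h1 h2 h3
  have hle : (inclGraph n).dist A B ≤ 2 := by
    simpa using SimpleGraph.dist_le
      (SimpleGraph.Walk.cons hCA (SimpleGraph.Walk.cons hCB SimpleGraph.Walk.nil))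
  have h0 : (inclGraph n).dist A B ≠ 0 := by
    intro h
    rcases SimpleGraph.dist_eq_zero_iff_eq_or_not_reachable.mp h with h' | h'
    · exact hne h'
    · exact h' ⟨SimpleGraph.Walk.cons hCA (SimpleGraph.Walk.cons hCB SimpleGraph.Walk.nil)⟩
  have hone : (inclGraph n).dist A B ≠ 1 := fun h => hnadj (SimpleGraph.dist_eq_one_iff_adj.mp h)
  omega

lemma not_adj_compl {A B : SubVert n} (hB : B.1 = A.1ᶜ) : ¬ (inclGraph n).Adj A B := by
  rintro (h | h)
  · obtain ⟨a, ha⟩ := A.2.1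
    have h1 : a ∈ B.1 := h.subset ha
    rw [hB, Finset.mem_compl] at h1
    exact h1 ha
  · obtain ⟨b, hb⟩ := B.2.1
    have h1 : b ∈ A.1 := h.subset hb
    rw [hB, Finset.mem_compl] at hb
    exact hb h1

/-- walk of length 3 to the complement, assuming the complement has ≥ 2 elements -/
lemma exists_walk_compl {A B : SubVert n} (hB : B.1 = A.1ᶜ) (hc : 2 ≤ B.1.card) :
    ∃ p : (inclGraph n).Walk A B, p.length = 3 := by
  obtain ⟨b, hb⟩ := B.2.1
  have hbA : b ∉ A.1 := by rw [hB, Finset.mem_compl] at hb; exact hb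
  obtain ⟨a, ha⟩ := A.2.1
  have hab : a ≠ b := fun h => hbA (h ▸ ha)
  have hW1prop : A.1 ∪ {b} ≠ Finset.univ := by
    intro h
    have hsub : B.1 ⊆ {b} := by
      intro x hx
      have hx' : x ∈ A.1 ∪ {b} := by rw [h]; exact Finset.mem_univ x
      rcases Finset.mem_union.mp hx' with h' | h'
      · exfalso; rw [hB, Finset.mem_compl] at hx; exact hx h'
      · exact h'
    have := Finset.card_le_card hsub
    simp at this
    omega
  have hW2prop : ({b} : Finset (Fin n)) ≠ Finset.univ := by
    intro h
    have h' : a ∈ ({b} : Finset (Fin n)) := by rw [h]; exact Finset.mem_univ a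
    exact hab (Finset.mem_singleton.mp h')
  have h1 : (inclGraph n).Adj A ⟨A.1 ∪ {b}, A.2.1.mono Finset.subset_union_left, hW1prop⟩ :=
    Or.inl ⟨Finset.subset_union_left,
      fun hs => hbA (hs (Finset.mem_union_right _ (Finset.mem_singleton_self b)))⟩
  have h2 : (inclGraph n).Adj ⟨A.1 ∪ {b}, A.2.1.mono Finset.subset_union_left, hW1prop⟩
      ⟨({b} : Finset (Fin n)), Finset.singleton_nonempty b, hW2prop⟩ := by
    refine Or.inr ⟨Finset.subset_union_right, fun hs => ?_⟩
    have : a ∈ ({b} : Finset (Fin n)) := hs (Finset.mem_union_left _ ha)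
    exact hab (Finset.mem_singleton.mp this)
  have h3 : (inclGraph n).Adj ⟨({b} : Finset (Fin n)), Finset.singleton_nonempty b, hW2prop⟩ B := by
    refine Or.inl ⟨Finset.singleton_subset_iff.mpr hb, fun hs => ?_⟩
    have := Finset.card_le_card hs
    simp at this
    omega
  exact ⟨SimpleGraph.Walk.cons h1 (SimpleGraph.Walk.cons h2 (SimpleGraph.Walk.cons h3
    SimpleGraph.Walk.nil)), rfl⟩

lemma dist_eq_three (hn : 3 ≤ n) {A B : SubVert n} (hB : B.1 = A.1ᶜ) :
    (inclGraph n).dist A B = 3 := by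
  have hA : A.1 = B.1ᶜ := by rw [hB, compl_compl]
  have hcards : A.1.card + B.1.card = n := by
    rw [hB]
    have := Finset.card_add_card_compl A.1
    simpa using this
  obtain ⟨p, hp⟩ : ∃ p : (inclGraph n).Walk A B, p.length = 3 := by
    by_cases hc : 2 ≤ B.1.card
    · exact exists_walk_compl hB hc
    · have hc' : 2 ≤ A.1.card := by
        have := B.2.1.card_pos
        omega
      obtain ⟨q, hq⟩ := exists_walk_compl hA hc'
      exact ⟨q.reverse, by simpa using hq⟩
  have hle : (inclGraph n).dist A B ≤ 3 := hp ▸ SimpleGraph.dist_le p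
  have hne : A ≠ B := by
    apply subvert_ne
    intro h
    obtain ⟨a, ha⟩ := A.2.1
    have ha' : a ∈ B.1 := h ▸ ha
    rw [hB, Finset.mem_compl] at ha'
    exact ha' ha
  have h0 : (inclGraph n).dist A B ≠ 0 := by
    intro h
    rcases SimpleGraph.dist_eq_zero_iff_eq_or_not_reachable.mp h with h' | h'
    · exact hne h'
    · exact h' ⟨p⟩
  have h1 : (inclGraph n).dist A B ≠ 1 := fun h =>
    not_adj_compl hB (SimpleGraph.dist_eq_one_iff_adj.mp h)
  have h2 : (inclGraph n).dist A B ≠ 2 := by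
    intro h
    obtain ⟨q, hq⟩ : ∃ q : (inclGraph n).Walk A B, q.length = (inclGraph n).dist A B :=
      SimpleGraph.Reachable.exists_walk_length_eq_dist ⟨p⟩
    rw [h] at hq
    set C := q.getVert 1 with hC
    have hAC : (inclGraph n).Adj A C := by
      have := q.adj_getVert_succ (i := 0) (by omega)
      simpa [SimpleGraph.Walk.getVert_zero] using this
    have hCB : (inclGraph n).Adj C B := by
      have h' := q.adj_getVert_succ (i := 1) (by omega)
      have h2' : q.getVert 2 = B := by
        have := q.getVert_length
        rwa [hq] at this
      rwa [h2'] at h'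
    obtain ⟨c, hcC⟩ : C.1.Nonempty := C.2.1
    obtain ⟨a, ha⟩ := A.2.1
    obtain ⟨b, hb⟩ := B.2.1
    have hbA : b ∉ A.1 := by rw [hB, Finset.mem_compl] at hb; exact hb
    rcases hAC with hAC | hAC <;> rcases hCB with hCB | hCB
    · -- A ⊂ C, C ⊂ B = Aᶜ
      have h1' : a ∈ B.1 := hCB.subset (hAC.subset ha)
      rw [hB, Finset.mem_compl] at h1'
      exact h1' ha
    · -- A ⊂ C, B ⊂ C : C = univ
      apply C.2.2
      apply Finset.univ_subset_iff.mp
      intro x _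
      by_cases hx : x ∈ A.1
      · exact hAC.subset hx
      · exact hCB.subset (by rw [hB, Finset.mem_compl]; exact hx)
    · -- C ⊂ A, C ⊂ B
      have h1' : c ∈ B.1 := hCB.subset hcC
      rw [hB, Finset.mem_compl] at h1'
      exact h1' (hAC.subset hcC)
    · -- C ⊂ A, B ⊂ C
      exact hbA (hAC.subset (hCB.subset hb))
  omega

lemma dist_le_three (hn : 3 ≤ n) (A B : SubVert n) : (inclGraph n).dist A B ≤ 3 := by
  by_cases he : A = B
  · rw [he, SimpleGraph.dist_self]; omega
  by_cases hadj : (inclGraph n).Adj A B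
  · rw [dist_eq_one_of_adj hadj]; omega
  by_cases hc : B.1 = A.1ᶜ
  · rw [dist_eq_three hn hc]
  · have h1 : ¬ A.1 ⊆ B.1 := fun hs => hadj (Or.inl ⟨hs, fun hs' => he (Subtype.ext (le_antisymm hs hs'))⟩)
    have h2 : ¬ B.1 ⊆ A.1 := fun hs => hadj (Or.inr ⟨hs, fun hs' => he (Subtype.ext (le_antisymm hs' hs))⟩)
    rw [dist_eq_two h1 h2 hc]
    omega

lemma dist_pos_of_ne (hn : 3 ≤ n) {A B : SubVert n} (he : A ≠ B) :
    1 ≤ (inclGraph n).dist A B := by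
  by_cases hadj : (inclGraph n).Adj A B
  · rw [dist_eq_one_of_adj hadj]
  by_cases hc : B.1 = A.1ᶜ
  · rw [dist_eq_three hn hc]; omega
  · have h1 : ¬ A.1 ⊆ B.1 := fun hs => hadj (Or.inl ⟨hs, fun hs' => he (Subtype.ext (le_antisymm hs hs'))⟩)
    have h2 : ¬ B.1 ⊆ A.1 := fun hs => hadj (Or.inr ⟨hs, fun hs' => he (Subtype.ext (le_antisymm hs' hs))⟩)
    rw [dist_eq_two h1 h2 hc]
    omega

lemma compl_of_dist_eq_three (hn : 3 ≤ n) {A B : SubVert n}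
    (h : (inclGraph n).dist A B = 3) : B.1 = A.1ᶜ := by
  by_contra hc
  by_cases he : A = B
  · rw [he, SimpleGraph.dist_self] at h; omega
  by_cases hadj : (inclGraph n).Adj A B
  · rw [dist_eq_one_of_adj hadj] at h; omega
  · have h1 : ¬ A.1 ⊆ B.1 := fun hs => hadj (Or.inl ⟨hs, fun hs' => he (Subtype.ext (le_antisymm hs hs'))⟩)
    have h2 : ¬ B.1 ⊆ A.1 := fun hs => hadj (Or.inr ⟨hs, fun hs' => he (Subtype.ext (le_antisymm hs' hs))⟩)
    rw [dist_eq_two h1 h2 hc] at h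
    omega

end Dist
section ISet

variable {n : ℕ}

instance : DecidableEq (SubVert n) := by unfold SubVert; infer_instance
instance : Fintype (SubVert n) := by unfold SubVert; infer_instance

lemma card_subvert (hn : 3 ≤ n) : Fintype.card (SubVert n) = 2 ^ n - 2 := by
  have h1 : Fintype.card (SubVert n) =
      ((Finset.univ : Finset (Finset (Fin n))).filter
        (fun A => A.Nonempty ∧ A ≠ Finset.univ)).card := by
    unfold SubVert
    exact Fintype.card_subtype _
  have h2 : ((Finset.univ : Finset (Finset (Fin n))).filter
      (fun A => ¬(A.Nonempty ∧ A ≠ Finset.univ))) = {∅, Finset.univ} := by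
    ext A
    simp only [Finset.mem_filter, Finset.mem_univ, true_and, Finset.mem_insert,
      Finset.mem_singleton]
    constructor
    · intro h
      by_cases hA : A = ∅
      · exact Or.inl hA
      · right
        by_contra hA2
        exact h ⟨Finset.nonempty_iff_ne_empty.mpr hA, hA2⟩
    · rintro (rfl | rfl)
      · intro h; exact h.1.ne_empty rfl
      · intro h; exact h.2 rfl
  have h3 : ((Finset.univ : Finset (Finset (Fin n))).filter
        (fun A => A.Nonempty ∧ A ≠ Finset.univ)).card +
      ((Finset.univ : Finset (Finset (Fin n))).filter
        (fun A => ¬(A.Nonempty ∧ A ≠ Finset.univ))).card =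
      (Finset.univ : Finset (Finset (Fin n))).card := by
    simpa using Finset.card_filter_add_card_filter_not
      (s := (Finset.univ : Finset (Finset (Fin n))))
      (p := fun A => A.Nonempty ∧ A ≠ Finset.univ)
  rw [h2] at h3
  have h4 : ({∅, Finset.univ} : Finset (Finset (Fin n))).card = 2 := by
    rw [Finset.card_pair]
    intro h
    have : (⟨0, by omega⟩ : Fin n) ∈ (∅ : Finset (Fin n)) := by
      rw [h]; exact Finset.mem_univ _
    simp at this
  have h5 : (Finset.univ : Finset (Finset (Fin n))).card = 2 ^ n := by
    rw [Finset.card_univ, Fintype.card_finset, Fintype.card_fin]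
  omega

/-- the last element of Fin n -/
def lastF (n : ℕ) (hn : 3 ≤ n) : Fin n := ⟨n - 1, by omega⟩

/-- initial segment vertex -/
def segV (n : ℕ) (hn : 3 ≤ n) (k : ℕ) : SubVert n :=
  ⟨Finset.univ.filter (fun x : Fin n => x.val ≤ k ∧ x.val ≤ n - 2),
   ⟨⟨0, by omega⟩, by simp⟩,
   by
     intro h
     have h' : (lastF n hn) ∈ Finset.univ.filter (fun x : Fin n => x.val ≤ k ∧ x.val ≤ n - 2) := by
       rw [h]; exact Finset.mem_univ _
     simp only [Finset.mem_filter, lastF] at h'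
     omega⟩

lemma segV_mem (hn : 3 ≤ n) {k : ℕ} (x : Fin n) :
    x ∈ (segV n hn k).1 ↔ (x.val ≤ k ∧ x.val ≤ n - 2) := by
  simp [segV]

/-- singleton vertex -/
def sgV (n : ℕ) (hn : 3 ≤ n) (i : ℕ) : SubVert n :=
  ⟨{if h : i < n then (⟨i, h⟩ : Fin n) else ⟨0, by omega⟩},
   Finset.singleton_nonempty _,
   by
     intro h
     have h1 : ({if h : i < n then (⟨i, h⟩ : Fin n) else ⟨0, by omega⟩} : Finset (Fin n)).card = 1 :=
       Finset.card_singleton _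
     rw [h, Finset.card_univ, Fintype.card_fin] at h1
     omega⟩

lemma sgV_val (hn : 3 ≤ n) {i : ℕ} (hi : i < n) :
    (sgV n hn i).1 = {(⟨i, hi⟩ : Fin n)} := by
  simp only [sgV, dif_pos hi]

/-- The independent set -/
def ISet (n : ℕ) (hn : 3 ≤ n) : Finset (SubVert n) :=
  ((Finset.range (n - 1)).image (fun k => segV n hn k)) ∪
  ((Finset.range (n - 2)).image (fun i => sgV n hn (i + 1)))

lemma lastF_not_mem_ISet (hn : 3 ≤ n) {A : SubVert n} (hA : A ∈ ISet n hn) :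
    lastF n hn ∉ A.1 := by
  rw [ISet, Finset.mem_union] at hA
  rcases hA with hA | hA <;> obtain ⟨k, hk, rfl⟩ := Finset.mem_image.mp hA <;>
    rw [Finset.mem_range] at hk
  · intro h
    rw [segV_mem hn] at h
    simp only [lastF] at h
    omega
  · intro h
    rw [sgV_val hn (show k + 1 < n by omega), Finset.mem_singleton, lastF, Fin.mk.injEq] at h
    omega

lemma ISet_pairwise (hn : 3 ≤ n) {A B : SubVert n} (hA : A ∈ ISet n hn) (hB : B ∈ ISet n hn) :
    A.1 ⊆ B.1 ∨ B.1 ⊆ A.1 ∨ A.1 ∩ B.1 = ∅ := by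
  rw [ISet, Finset.mem_union] at hA hB
  rcases hA with hA | hA <;> obtain ⟨k, hk, rfl⟩ := Finset.mem_image.mp hA <;>
    rw [Finset.mem_range] at hk <;>
    rcases hB with hB | hB <;> obtain ⟨l, hl, rfl⟩ := Finset.mem_image.mp hB <;>
    rw [Finset.mem_range] at hl
  · -- seg seg
    rcases le_total k l with h | h
    · left
      intro x hx
      rw [segV_mem hn] at hx ⊢
      omega
    · right; left
      intro x hx
      rw [segV_mem hn] at hx ⊢
      omega
  · -- seg, singleton
    by_cases h : l + 1 ≤ k
    · right; left
      intro x hx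
      rw [sgV_val hn (show l + 1 < n by omega), Finset.mem_singleton] at hx
      subst hx
      rw [segV_mem hn]
      constructor <;> simp <;> omega
    · right; right
      rw [Finset.eq_empty_iff_forall_notMem]
      intro x hx
      rw [Finset.mem_inter, segV_mem hn,
        sgV_val hn (show l + 1 < n by omega), Finset.mem_singleton] at hx
      obtain ⟨hx1, hx2⟩ := hx
      rw [hx2] at hx1
      simp at hx1
      omega
  · -- singleton, seg
    by_cases h : k + 1 ≤ l
    · left
      intro x hx
      rw [sgV_val hn (show k + 1 < n by omega), Finset.mem_singleton] at hx
      subst hx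
      rw [segV_mem hn]
      constructor <;> simp <;> omega
    · right; right
      rw [Finset.eq_empty_iff_forall_notMem]
      intro x hx
      rw [Finset.mem_inter, sgV_val hn (show k + 1 < n by omega), Finset.mem_singleton,
        segV_mem hn] at hx
      obtain ⟨hx2, hx1⟩ := hx
      rw [hx2] at hx1
      simp at hx1
      omega
  · -- singleton, singleton
    by_cases h : k = l
    · subst h; left; exact subset_rfl
    · right; right
      rw [Finset.eq_empty_iff_forall_notMem]
      intro x hx
      rw [Finset.mem_inter, sgV_val hn (show k + 1 < n by omega),
        sgV_val hn (show l + 1 < n by omega), Finset.mem_singleton, Finset.mem_singleton] at hx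
      obtain ⟨hx1, hx2⟩ := hx
      rw [hx1, Fin.mk.injEq] at hx2
      omega

lemma ISet_card (hn : 3 ≤ n) : (ISet n hn).card = 2 * n - 3 := by
  have key : ∀ k l : ℕ, l < n - 1 → k < l → segV n hn k ≠ segV n hn l := by
    intro k l hl hlt h
    have hx : (⟨l, by omega⟩ : Fin n) ∈ (segV n hn l).1 := by
      rw [segV_mem hn]
      constructor <;> simp <;> omega
    rw [← h, segV_mem hn] at hx
    simp at hx
    omega
  have hinj1 : Set.InjOn (fun k => segV n hn k) (Finset.range (n - 1)) := by
    intro k hk l hl h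
    rw [Finset.coe_range, Set.mem_Iio] at hk hl
    change segV n hn k = segV n hn l at h
    by_contra hne
    rcases Nat.lt_or_ge k l with hlt | hge
    · exact key k l hl hlt h
    · exact key l k hk (by omega) h.symm
  have hinj2 : Set.InjOn (fun i => sgV n hn (i + 1)) (Finset.range (n - 2)) := by
    intro k hk l hl h
    rw [Finset.coe_range, Set.mem_Iio] at hk hl
    change sgV n hn (k + 1) = sgV n hn (l + 1) at h
    have h1 : (sgV n hn (k + 1)).1 = (sgV n hn (l + 1)).1 := by rw [h]
    rw [sgV_val hn (show k + 1 < n by omega), sgV_val hn (show l + 1 < n by omega),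
      Finset.singleton_inj, Fin.mk.injEq] at h1
    omega
  have hdisj : Disjoint ((Finset.range (n - 1)).image (fun k => segV n hn k))
      ((Finset.range (n - 2)).image (fun i => sgV n hn (i + 1))) := by
    rw [Finset.disjoint_left]
    intro A hA hA'
    obtain ⟨k, hk, rfl⟩ := Finset.mem_image.mp hA
    obtain ⟨l, hl, hEq⟩ := Finset.mem_image.mp hA'
    rw [Finset.mem_range] at hl
    change sgV n hn (l + 1) = segV n hn k at hEq
    have h0 : (⟨0, by omega⟩ : Fin n) ∈ (segV n hn k).1 := by
      rw [segV_mem hn]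
      simp
    rw [← hEq, sgV_val hn (show l + 1 < n by omega), Finset.mem_singleton, Fin.mk.injEq] at h0
    omega
  rw [ISet, Finset.card_union_of_disjoint hdisj, Finset.card_image_of_injOn hinj1,
    Finset.card_image_of_injOn hinj2, Finset.card_range, Finset.card_range]
  omega

end ISet
section Upper

variable {n : ℕ}

/-- resolving witness for a comparable pair inside the independent set -/
lemma comparable_witness (hn : 3 ≤ n) {u v : SubVert n}
    (hu : u ∈ ISet n hn) (hv : v ∈ ISet n hn) (hss : u.1 ⊂ v.1) :
    ∃ w : SubVert n, w ∉ ISet n hn ∧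
      (inclGraph n).dist w v = (inclGraph n).dist w u + (inclGraph n).dist u v := by
  have hlu : lastF n hn ∉ u.1 := lastF_not_mem_ISet hn hu
  have hlv : lastF n hn ∉ v.1 := lastF_not_mem_ISet hn hv
  have hwprop : u.1 ∪ {lastF n hn} ≠ Finset.univ := by
    intro h
    obtain ⟨b, hbv, hbu⟩ := Finset.exists_of_ssubset hss
    have hb' : b ∈ u.1 ∪ {lastF n hn} := by rw [h]; exact Finset.mem_univ b
    rcases Finset.mem_union.mp hb' with h' | h'
    · exact hbu h'
    · rw [Finset.mem_singleton] at h'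
      subst h'
      exact hlv hbv
  set w : SubVert n := ⟨u.1 ∪ {lastF n hn}, u.2.1.mono Finset.subset_union_left, hwprop⟩ with hw
  have hwI : w ∉ ISet n hn := by
    intro h
    exact lastF_not_mem_ISet hn h (Finset.mem_union_right _ (Finset.mem_singleton_self _))
  have hadj_wu : (inclGraph n).Adj w u := by
    refine Or.inr ⟨Finset.subset_union_left, fun hs => ?_⟩
    exact hlu (hs (Finset.mem_union_right _ (Finset.mem_singleton_self _)))
  have hadj_uv : (inclGraph n).Adj u v := Or.inl hss
  have hdwv : (inclGraph n).dist w v = 2 := by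
    apply dist_eq_two
    · -- ¬ w ⊆ v
      intro hs
      exact hlv (hs (Finset.mem_union_right _ (Finset.mem_singleton_self _)))
    · -- ¬ v ⊆ w
      intro hs
      have hvu : v.1 ⊆ u.1 := by
        intro x hx
        rcases Finset.mem_union.mp (hs hx) with h' | h'
        · exact h'
        · rw [Finset.mem_singleton] at h'
          exact absurd (h' ▸ hx) hlv
      exact (Finset.ssubset_iff_subset_ne.mp hss).2 (le_antisymm hss.subset hvu)
    · -- v ≠ wᶜ
      intro h
      obtain ⟨a, ha⟩ := u.2.1
      have h1 : a ∈ v.1 := hss.subset ha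
      rw [h, Finset.mem_compl] at h1
      exact h1 (Finset.mem_union_left _ ha)
  refine ⟨w, hwI, ?_⟩
  rw [hdwv, dist_eq_one_of_adj hadj_wu, dist_eq_one_of_adj hadj_uv]

/-- resolving witness for a disjoint pair inside the independent set -/
lemma disjoint_witness (hn : 3 ≤ n) {u v : SubVert n}
    (hu : u ∈ ISet n hn) (hv : v ∈ ISet n hn) (hdisj : u.1 ∩ v.1 = ∅) :
    ∃ w : SubVert n, w ∉ ISet n hn ∧
      (inclGraph n).dist w u = (inclGraph n).dist w v + (inclGraph n).dist v u := by
  have hlu : lastF n hn ∉ u.1 := lastF_not_mem_ISet hn hu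
  have hlv : lastF n hn ∉ v.1 := lastF_not_mem_ISet hn hv
  set w : SubVert n := complVert u with hw
  have hwval : w.1 = u.1ᶜ := rfl
  have hwI : w ∉ ISet n hn := by
    intro h
    exact lastF_not_mem_ISet hn h (Finset.mem_compl.mpr hlu)
  have hdwu : (inclGraph n).dist w u = 3 := by
    apply dist_eq_three hn
    rw [hwval, compl_compl]
  have hvsub : v.1 ⊆ u.1ᶜ := by
    intro x hx
    rw [Finset.mem_compl]
    intro hxu
    have : x ∈ u.1 ∩ v.1 := Finset.mem_inter.mpr ⟨hxu, hx⟩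
    simp [hdisj] at this
  have hadj_wv : (inclGraph n).Adj w v := by
    refine Or.inr ⟨hwval ▸ hvsub, fun hs => ?_⟩
    exact hlv (hs (hwval ▸ Finset.mem_compl.mpr hlu))
  have hdvu : (inclGraph n).dist v u = 2 := by
    apply dist_eq_two
    · intro hs
      obtain ⟨a, ha⟩ := v.2.1
      have : a ∈ u.1 ∩ v.1 := Finset.mem_inter.mpr ⟨hs ha, ha⟩
      simp [hdisj] at this
    · intro hs
      obtain ⟨a, ha⟩ := u.2.1
      have : a ∈ u.1 ∩ v.1 := Finset.mem_inter.mpr ⟨ha, hs ha⟩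
      simp [hdisj] at this
    · intro h
      exact hlu (h ▸ Finset.mem_compl.mpr hlv)
  refine ⟨w, hwI, ?_⟩
  rw [hdwu, hdvu, dist_eq_one_of_adj hadj_wv]

lemma upper_resolving (hn : 3 ≤ n) :
    IsStrongResolving (inclGraph n) ↑(Finset.univ \ ISet n hn) := by
  intro u v huv
  by_cases hu : u ∈ ISet n hn
  swap
  · refine ⟨u, by simp [hu], Or.inr ?_⟩
    rw [SimpleGraph.dist_self, Nat.zero_add]
  by_cases hv : v ∈ ISet n hn
  swap
  · refine ⟨v, by simp [hv], Or.inl ?_⟩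
    rw [SimpleGraph.dist_self, Nat.zero_add]
  have hne1 : u.1 ≠ v.1 := subvert_ne1 huv
  rcases ISet_pairwise hn hu hv with h | h | h
  · obtain ⟨w, hwI, hweq⟩ := comparable_witness hn hu hv ⟨h, fun hs => hne1 (le_antisymm h hs)⟩
    exact ⟨w, by simp [hwI], Or.inr hweq⟩
  · obtain ⟨w, hwI, hweq⟩ := comparable_witness hn hv hu ⟨h, fun hs => hne1 (le_antisymm hs h)⟩
    exact ⟨w, by simp [hwI], Or.inl hweq⟩
  · obtain ⟨w, hwI, hweq⟩ := disjoint_witness hn hu hv h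
    exact ⟨w, by simp [hwI], Or.inl hweq⟩

end Upper
section Lower

variable {n : ℕ}

/-- cross-free relation on finsets -/
def CrossFree (X Y : Finset (Fin n)) : Prop :=
  X ⊆ Y ∨ Y ⊆ X ∨ X ∩ Y = ∅ ∨ X ∪ Y = Finset.univ

lemma crossFree_symm {X Y : Finset (Fin n)} (h : CrossFree X Y) : CrossFree Y X := by
  rcases h with h | h | h | h
  · exact Or.inr (Or.inl h)
  · exact Or.inl h
  · exact Or.inr (Or.inr (Or.inl (by rw [Finset.inter_comm]; exact h)))
  · exact Or.inr (Or.inr (Or.inr (by rw [Finset.union_comm]; exact h)))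

lemma crossFree_compl_left {X Y : Finset (Fin n)} (h : CrossFree X Y) : CrossFree Xᶜ Y := by
  rcases h with h | h | h | h
  · -- X ⊆ Y : Xᶜ ∪ Y = univ
    refine Or.inr (Or.inr (Or.inr ?_))
    apply Finset.univ_subset_iff.mp
    intro x _
    by_cases hx : x ∈ X
    · exact Finset.mem_union_right _ (h hx)
    · exact Finset.mem_union_left _ (Finset.mem_compl.mpr hx)
  · -- Y ⊆ X : Xᶜ ∩ Y = ∅
    refine Or.inr (Or.inr (Or.inl ?_))
    rw [Finset.eq_empty_iff_forall_notMem]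
    intro x hx
    rw [Finset.mem_inter, Finset.mem_compl] at hx
    exact hx.1 (h hx.2)
  · -- X ∩ Y = ∅ : Y ⊆ Xᶜ
    refine Or.inr (Or.inl ?_)
    intro x hx
    rw [Finset.mem_compl]
    intro hxX
    have : x ∈ X ∩ Y := Finset.mem_inter.mpr ⟨hxX, hx⟩
    simp [h] at this
  · -- X ∪ Y = univ : Xᶜ ⊆ Y
    refine Or.inl ?_
    intro x hx
    rw [Finset.mem_compl] at hx
    have hx' : x ∈ X ∪ Y := by rw [h]; exact Finset.mem_univ x
    rcases Finset.mem_union.mp hx' with h' | h'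
    · exact absurd h' hx
    · exact h'

lemma crossFree_compl_right {X Y : Finset (Fin n)} (h : CrossFree X Y) : CrossFree X Yᶜ :=
  crossFree_symm (crossFree_compl_left (crossFree_symm h))

lemma lower_bound (hn : 3 ≤ n) (S : Finset (SubVert n))
    (hS : IsStrongResolving (inclGraph n) ↑S) : 2 ^ n - 2 * n + 1 ≤ S.card := by
  set T : Finset (SubVert n) := Finset.univ \ S with hT
  have hTS : ∀ A ∈ T, A ∉ S := by
    intro A hA
    rw [hT, Finset.mem_sdiff] at hA
    exact hA.2
  -- no complementary pairs in T
  have key1 : ∀ A ∈ T, ∀ B ∈ T, A ≠ B → B.1 ≠ A.1ᶜ := by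
    intro A hA B hB hne hcompl
    have hd : (inclGraph n).dist A B = 3 := dist_eq_three hn hcompl
    have hd' : (inclGraph n).dist B A = 3 := by rw [SimpleGraph.dist_comm]; exact hd
    obtain ⟨w, hwS, hcase⟩ := hS A B hne
    rw [Finset.mem_coe] at hwS
    have hwA : w ≠ A := fun h => hTS A hA (h ▸ hwS)
    have hwB : w ≠ B := fun h => hTS B hB (h ▸ hwS)
    have h1 : 1 ≤ (inclGraph n).dist w A := dist_pos_of_ne hn hwA
    have h2 : 1 ≤ (inclGraph n).dist w B := dist_pos_of_ne hn hwB
    have h3 : (inclGraph n).dist w A ≤ 3 := dist_le_three hn w A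
    have h4 : (inclGraph n).dist w B ≤ 3 := dist_le_three hn w B
    rcases hcase with h | h <;> rw [hd'] at * <;> omega
  -- cross-freeness in T
  have key2 : ∀ A ∈ T, ∀ B ∈ T, A ≠ B → CrossFree A.1 B.1 := by
    intro A hA B hB hne
    by_contra hcf
    rw [CrossFree] at hcf
    push_neg at hcf
    obtain ⟨hAB, hBA, hint, huni⟩ := hcf
    have hcompl : B.1 ≠ A.1ᶜ := key1 A hA B hB hne
    have hcompl' : A.1 ≠ B.1ᶜ := key1 B hB A hA hne.symm
    have hd : (inclGraph n).dist A B = 2 := dist_eq_two hAB hBA hcompl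
    have hd' : (inclGraph n).dist B A = 2 := dist_eq_two hBA hAB hcompl'
    obtain ⟨w, hwS, hcase⟩ := hS A B hne
    rw [Finset.mem_coe] at hwS
    have hwA : w ≠ A := fun h => hTS A hA (h ▸ hwS)
    have hwB : w ≠ B := fun h => hTS B hB (h ▸ hwS)
    have h1 : 1 ≤ (inclGraph n).dist w A := dist_pos_of_ne hn hwA
    have h2 : 1 ≤ (inclGraph n).dist w B := dist_pos_of_ne hn hwB
    have h3 : (inclGraph n).dist w A ≤ 3 := dist_le_three hn w A
    have h4 : (inclGraph n).dist w B ≤ 3 := dist_le_three hn w B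
    -- in either case, w is the complement of one of them and adjacent to the other
    have main : ∀ C D : SubVert n, C ∈ T → D ∈ T → C ≠ D →
        (inclGraph n).dist w C = 3 → (inclGraph n).dist w D = 1 →
        C.1 ∩ D.1 ≠ ∅ → C.1 ∪ D.1 ≠ Finset.univ → False := by
      intro C D hC hD hCD hd3 hd1 hi hu
      have hCcompl : C.1 = w.1ᶜ := compl_of_dist_eq_three hn hd3
      have hwc : w.1 = C.1ᶜ := by rw [hCcompl, compl_compl]
      have hadj : (inclGraph n).Adj w D := SimpleGraph.dist_eq_one_iff_adj.mp hd1
      rcases hadj with h | h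
      · -- w ⊆ D, i.e. Cᶜ ⊆ D, so C ∪ D = univ
        apply hu
        apply Finset.univ_subset_iff.mp
        intro x _
        by_cases hx : x ∈ C.1
        · exact Finset.mem_union_left _ hx
        · exact Finset.mem_union_right _ (h.subset (by rw [hwc, Finset.mem_compl]; exact hx))
      · -- D ⊆ w = Cᶜ, so C ∩ D = ∅
        apply hi
        rw [Finset.eq_empty_iff_forall_notMem]
        intro x hx
        rw [Finset.mem_inter] at hx
        have := h.subset hx.2
        rw [hwc, Finset.mem_compl] at this
        exact this hx.1
    rcases hcase with h | h
    · -- dist w A = dist w B + dist B A = dist w B + 2, so dist w A = 3, dist w B = 1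
      have hd3 : (inclGraph n).dist w A = 3 := by omega
      have hd1 : (inclGraph n).dist w B = 1 := by omega
      exact main A B hA hB hne hd3 hd1 hint.ne_empty huni
    · have hd3 : (inclGraph n).dist w B = 3 := by omega
      have hd1 : (inclGraph n).dist w A = 1 := by omega
      refine main B A hB hA hne.symm hd3 hd1 ?_ ?_
      · rw [Finset.inter_comm]; exact hint.ne_empty
      · rw [Finset.union_comm]; exact huni
  -- the normalization map
  set f : SubVert n → Finset (Fin n) :=
    fun A => if lastF n hn ∈ A.1 then A.1ᶜ else A.1 with hf
  have hf_ne : ∀ A : SubVert n, (f A).Nonempty := by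
    intro A
    by_cases h : lastF n hn ∈ A.1
    · simp only [hf, if_pos h]
      rw [Finset.nonempty_iff_ne_empty]
      intro h'
      exact A.2.2 (by simpa using congrArg compl h')
    · simp only [hf, if_neg h]; exact A.2.1
  have hf_last : ∀ A : SubVert n, lastF n hn ∉ f A := by
    intro A
    by_cases h : lastF n hn ∈ A.1
    · simp only [hf, if_pos h, Finset.mem_compl]; simpa using h
    · simp only [hf, if_neg h]; exact h
  have hinj : Set.InjOn f ↑T := by
    intro A hA B hB h
    rw [Finset.mem_coe] at hA hB
    by_contra hne
    by_cases h1 : lastF n hn ∈ A.1 <;> by_cases h2 : lastF n hn ∈ B.1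
    · simp only [hf, if_pos h1, if_pos h2] at h
      exact hne (Subtype.ext (compl_inj_iff.mp h))
    · simp only [hf, if_pos h1, if_neg h2] at h
      exact key1 A hA B hB hne h.symm
    · simp only [hf, if_neg h1, if_pos h2] at h
      exact key1 B hB A hA (Ne.symm hne) h
    · simp only [hf, if_neg h1, if_neg h2] at h
      exact hne (Subtype.ext h)
  have hcf : ∀ A : SubVert n, ∀ B : SubVert n, CrossFree A.1 B.1 → CrossFree (f A) (f B) := by
    intro A B h
    by_cases h1 : lastF n hn ∈ A.1 <;> by_cases h2 : lastF n hn ∈ B.1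
    · simp only [hf, if_pos h1, if_pos h2]; exact crossFree_compl_right (crossFree_compl_left h)
    · simp only [hf, if_pos h1, if_neg h2]; exact crossFree_compl_left h
    · simp only [hf, if_neg h1, if_pos h2]; exact crossFree_compl_right h
    · simp only [hf, if_neg h1, if_neg h2]; exact h
  -- the laminar family
  set L : Finset (Finset (Fin n)) := T.image f with hL
  have hLcard : L.card = T.card := Finset.card_image_of_injOn hinj
  have hlam : ∀ X ∈ L, ∀ Y ∈ L, X ⊆ Y ∨ Y ⊆ X ∨ X ∩ Y = ∅ := by
    intro X hX Y hY
    obtain ⟨A, hA, rfl⟩ := Finset.mem_image.mp hX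
    obtain ⟨B, hB, rfl⟩ := Finset.mem_image.mp hY
    by_cases hne : A = B
    · subst hne; exact Or.inl subset_rfl
    have hcfAB : CrossFree (f A) (f B) := hcf A B (key2 A hA B hB hne)
    rcases hcfAB with h | h | h | h
    · exact Or.inl h
    · exact Or.inr (Or.inl h)
    · exact Or.inr (Or.inr h)
    · exfalso
      have : lastF n hn ∈ f A ∪ f B := by rw [h]; exact Finset.mem_univ _
      rcases Finset.mem_union.mp this with h' | h'
      · exact hf_last A h'
      · exact hf_last B h'
  have hground : ∀ X ∈ L, X ⊆ Finset.univ.erase (lastF n hn) ∧ X.Nonempty := by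
    intro X hX
    obtain ⟨A, hA, rfl⟩ := Finset.mem_image.mp hX
    refine ⟨fun x hx => Finset.mem_erase.mpr ⟨fun h => hf_last A (h ▸ hx), Finset.mem_univ x⟩,
      hf_ne A⟩
  have hL_le : L.card ≤ 2 * (Finset.univ.erase (lastF n hn)).card - 1 :=
    laminar_bound (Finset.univ.erase (lastF n hn)).card (Finset.univ.erase (lastF n hn)) L
      le_rfl hground hlam
  have hgcard : (Finset.univ.erase (lastF n hn)).card = n - 1 := by
    rw [Finset.card_erase_of_mem (Finset.mem_univ _), Finset.card_univ, Fintype.card_fin]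
  have hTcard : T.card ≤ 2 * n - 3 := by
    rw [← hLcard]
    rw [hgcard] at hL_le
    omega
  have hTuniv : T.card = Fintype.card (SubVert n) - S.card := by
    rw [hT, Finset.card_sdiff_of_subset (Finset.subset_univ S), Finset.card_univ]
  have hSle : S.card ≤ Fintype.card (SubVert n) := by
    rw [← Finset.card_univ]
    exact Finset.card_le_card (Finset.subset_univ S)
  have hcard := card_subvert hn
  have hpow : 2 * n + 1 ≤ 2 ^ n := by
    clear * - hn
    induction n with
    | zero => omega
    | succ m ih =>
        rcases Nat.lt_or_ge m 3 with h | h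
        · interval_cases m <;> simp <;> omega
        · have := ih (by omega)
          have : 2 ^ m ≤ 2 ^ (m + 1) := Nat.pow_le_pow_right (by omega) (by omega)
          have h2 : 2 ^ (m+1) = 2 * 2 ^ m := by ring
          omega
  omega

end Lower

lemma pow_lower (n : ℕ) (hn : 3 ≤ n) : 2 * n + 1 ≤ 2 ^ n := by
  induction n with
  | zero => omega
  | succ m ih =>
      rcases Nat.lt_or_ge m 3 with h | h
      · interval_cases m <;> omega
      · have h1 := ih (by omega)
        have h2 : 2 ^ (m + 1) = 2 * 2 ^ m := by ring
        omega

theorem stmt12 (n : ℕ) (hn : 3 ≤ n) :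
    sdim (inclGraph n) = 2 ^ n - 2 * n + 1 := by
  have hpow := pow_lower n hn
  have hcard : (Finset.univ \ ISet n hn).card = 2 ^ n - 2 * n + 1 := by
    rw [Finset.card_sdiff_of_subset (Finset.subset_univ _), Finset.card_univ, card_subvert hn, ISet_card hn]
    omega
  have hmem : (2 ^ n - 2 * n + 1) ∈
      {k | ∃ S : Finset (SubVert n), S.card = k ∧ IsStrongResolving (inclGraph n) ↑S} :=
    ⟨Finset.univ \ ISet n hn, hcard, upper_resolving hn⟩
  apply le_antisymm
  · exact Nat.sInf_le hmem
  · apply le_csInf ⟨_, hmem⟩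
    rintro k ⟨S, rfl, hres⟩
    exact lower_bound hn S hres
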